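/- Let f : ℝ^n → ℝ be a convex polynomial. If the Hessian ∇²f(x₀) is positive definite at some point x₀ ∈ ℝ^n, then f is strictly convex on ℝ^n. -/

import Mathlib

open Set

private lemma contDiff_mvpoly {n : ℕ} (p : MvPolynomial (Fin n) ℝ) :
    ContDiff ℝ ⊤ (fun x : Fin n → ℝ => MvPolynomial.eval x p) := by
  induction p using MvPolynomial.induction_on with
  | C a => simpa using contDiff_const
  | add p q hp hq => simpa using hp.add hq
  | mul_X p i hp =>
      simp only [MvPolynomial.eval_mul, MvPolynomial.eval_X]
      exact hp.mul (contDiff_apply ℝ ℝ i)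

private lemma exists_restrict_poly {n : ℕ} (p : MvPolynomial (Fin n) ℝ)
    (x v : Fin n → ℝ) :
    ∃ q : Polynomial ℝ, ∀ s : ℝ, MvPolynomial.eval (x + s • v) p = q.eval s := by
  refine ⟨MvPolynomial.eval₂ Polynomial.C
      (fun i => Polynomial.C (x i) + Polynomial.X * Polynomial.C (v i)) p, fun s => ?_⟩
  have h := MvPolynomial.eval₂_comp_left (Polynomial.evalRingHom s) Polynomial.C
      (fun i => Polynomial.C (x i) + Polynomial.X * Polynomial.C (v i)) p
  simp only [Polynomial.coe_evalRingHom] at h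
  rw [h]
  have h1 : (Polynomial.evalRingHom s).comp Polynomial.C = RingHom.id ℝ := by
    ext r; simp
  rw [h1]
  have h2 : (Polynomial.eval s ∘
      fun i => Polynomial.C (x i) + Polynomial.X * Polynomial.C (v i)) =
      fun i => x i + s * v i := by
    funext i
    simp only [Function.comp_apply, Polynomial.eval_add, Polynomial.eval_mul,
      Polynomial.eval_C, Polynomial.eval_X]
  have h3 : (x + s • v) = (fun i => x i + s * v i) := by
    funext i
    simp only [Pi.add_apply, Pi.smul_apply, smul_eq_mul]
  rw [h2, MvPolynomial.eval₂_id, h3]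

/-- A convex function on ℝ given by a polynomial which is affine somewhere inside (0,1)
is globally affine. -/
private lemma affine_of_convex_poly (q : Polynomial ℝ) (g : ℝ → ℝ)
    (hgq : ∀ s, g s = q.eval s) (hgc : ConvexOn ℝ Set.univ g)
    {t : ℝ} (ht0 : 0 < t) (ht1 : t < 1)
    (heq : g t = (1 - t) * g 0 + t * g 1) :
    ∀ s : ℝ, g s = g 0 + s * (g 1 - g 0) := by
  have key : ∀ s ∈ Set.Ioo (0:ℝ) t, g s = g 0 + s * (g 1 - g 0) := by
    rintro s ⟨hs0, hst⟩
    have hs1 : s < 1 := hst.trans ht1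
    -- upper bound : weights ((t-s)/t, s/t) on points 0 and t
    have h1 := hgc.2 (Set.mem_univ (0:ℝ)) (Set.mem_univ t)
      (show (0:ℝ) ≤ (t - s)/t from div_nonneg (by linarith) ht0.le)
      (show (0:ℝ) ≤ s/t from div_nonneg hs0.le ht0.le)
      (by field_simp; ring)
    simp only [smul_eq_mul, mul_zero, zero_add] at h1
    rw [show s/t*t = s by field_simp] at h1
    -- h1 : g s ≤ (t-s)/t * g 0 + s/t * g t
    have h1' : t * g s ≤ (t - s) * g 0 + s * g t := by
      have := mul_le_mul_of_nonneg_left h1 ht0.le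
      calc t * g s ≤ t * ((t-s)/t * g 0 + s/t * g t) := this
        _ = (t - s) * g 0 + s * g t := by field_simp
    have hupper : g s ≤ g 0 + s * (g 1 - g 0) := by
      have h3 : t * g s ≤ t * (g 0 + s * (g 1 - g 0)) := by nlinarith [h1']
      exact le_of_mul_le_mul_left h3 ht0
    -- lower bound : weights ((1-t)/(1-s), (t-s)/(1-s)) on points s and 1
    have hs1' : (0:ℝ) < 1 - s := by linarith
    have h2 := hgc.2 (Set.mem_univ s) (Set.mem_univ (1:ℝ))
      (show (0:ℝ) ≤ (1 - t)/(1 - s) from div_nonneg (by linarith) hs1'.le)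
      (show (0:ℝ) ≤ (t - s)/(1 - s) from div_nonneg (by linarith) hs1'.le)
      (by field_simp; ring)
    simp only [smul_eq_mul, mul_one] at h2
    rw [show (1-t)/(1-s)*s + (t-s)/(1-s) = t by field_simp; ring] at h2
    -- h2 : g t ≤ (1-t)/(1-s) * g s + (t-s)/(1-s) * g 1
    have h2' : (1 - s) * g t ≤ (1 - t) * g s + (t - s) * g 1 := by
      have := mul_le_mul_of_nonneg_left h2 hs1'.le
      calc (1-s) * g t ≤ (1-s) * ((1-t)/(1-s) * g s + (t-s)/(1-s) * g 1) := this
        _ = (1 - t) * g s + (t - s) * g 1 := by field_simp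
    have hlower : g 0 + s * (g 1 - g 0) ≤ g s := by
      have h4 : (1 - t) * (g 0 + s * (g 1 - g 0)) ≤ (1 - t) * g s := by nlinarith [h2']
      exact le_of_mul_le_mul_left h4 (by linarith)
    linarith
  -- the polynomial q agrees with an affine polynomial on an infinite set
  have hq : q = Polynomial.C (g 0) + Polynomial.C (g 1 - g 0) * Polynomial.X := by
    apply Polynomial.eq_of_infinite_eval_eq
    apply Set.Infinite.mono (s := Set.Ioo (0:ℝ) t)
    · intro s hs
      have := key s hs
      simp only [Set.mem_setOf_eq, Polynomial.eval_add, Polynomial.eval_C,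
        Polynomial.eval_mul, Polynomial.eval_X]
      rw [← hgq s, this]; ring
    · exact Set.Ioo_infinite ht0
  intro s
  rw [hgq s, hq]
  simp
  ring

/-- Linear bound comparison: if A + C*s ≤ B + D*s for all s, then C = D. -/
private lemma slope_eq_of_linear_le {A B C D : ℝ} (h : ∀ s : ℝ, A + C * s ≤ B + D * s) :
    C = D := by
  by_contra hne
  have hCD : C - D ≠ 0 := sub_ne_zero.mpr hne
  have := h ((B - A + 1)/(C - D))
  have h2 : (C - D) * ((B - A + 1)/(C - D)) = B - A + 1 := by field_simp
  nlinarith [this, h2]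

/-- A convex polynomial with positive definite Hessian at some point is strictly convex. -/
theorem convex_poly_posdef_hessian_strictConvex {n : ℕ}
    (p : MvPolynomial (Fin n) ℝ) (f : (Fin n → ℝ) → ℝ)
    (hf : ∀ x, f x = MvPolynomial.eval x p)
    (hconv : ConvexOn ℝ Set.univ f)
    (x₀ : Fin n → ℝ)
    (hpd : ∀ v : Fin n → ℝ, v ≠ 0 → 0 < iteratedFDeriv ℝ 2 f x₀ ![v, v]) :
    StrictConvexOn ℝ Set.univ f := by
  have hfeq : f = fun x => MvPolynomial.eval x p := funext hf
  have hsmooth : ContDiff ℝ ⊤ f := hfeq ▸ contDiff_mvpoly p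
  have hdiff : Differentiable ℝ f := hsmooth.differentiable (by simp)
  refine ⟨convex_univ, fun x _ y _ hxy a b ha hb hab => ?_⟩
  by_contra hlt
  push_neg at hlt
  have heq : f (a • x + b • y) = a * f x + b * f y :=
    le_antisymm (hconv.2 (Set.mem_univ x) (Set.mem_univ y) ha.le hb.le hab) hlt
  set v : Fin n → ℝ := y - x with hv
  have hvne : v ≠ 0 := sub_ne_zero.mpr (Ne.symm hxy)
  -- the restriction g of f to the line through x and y
  obtain ⟨q, hq⟩ := exists_restrict_poly p x v
  set g : ℝ → ℝ := fun s => f (x + s • v) with hgdef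
  have hgq : ∀ s, g s = q.eval s := fun s => (hf _).trans (hq s)
  have hgconv : ConvexOn ℝ Set.univ g := by
    refine ⟨convex_univ, ?_⟩
    intro u _ w _ c d hc hd hcd
    simp only [hgdef, smul_eq_mul]
    have h5 : c • (x + u • v) + d • (x + w • v) = (c + d) • x + (c * u + d * w) • v := by
      module
    rw [hcd, one_smul] at h5
    rw [← h5]
    exact hconv.2 (Set.mem_univ (x + u • v)) (Set.mem_univ (x + w • v)) hc hd hcd
  have hg0 : g 0 = f x := by simp [hgdef]
  have hg1 : g 1 = f y := by simp [hgdef, hv]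
  have hgb : g b = f (a • x + b • y) := by
    rw [hgdef]
    rw [show a • x + b • y = x + b • (y - x) by
      rw [show a = 1 - b by linarith]; module]
  -- g is affine
  have haff : ∀ s : ℝ, g s = g 0 + s * (g 1 - g 0) := by
    apply affine_of_convex_poly q g hgq hgconv hb (by linarith)
    rw [hgb, heq, hg0, hg1, show (1:ℝ) - b = a by linarith]
  set m : ℝ := g 1 - g 0 with hm
  -- key step : the derivative of f in direction v is m everywhere
  have hkey : ∀ u : Fin n → ℝ, fderiv ℝ f u v = m := by
    intro u
    apply slope_eq_of_linear_le (A := f u + fderiv ℝ f u (x - u)) (B := g 0 - 0)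
    intro s
    -- restriction of f to the segment from u to x + s • v
    set w : Fin n → ℝ := x + s • v - u with hw
    have hline : HasDerivAt (fun t : ℝ => f (u + t • w)) (fderiv ℝ f u w) 0 := by
      have h1 : HasDerivAt (fun t : ℝ => u + t • w) w 0 := by
        simpa using ((hasDerivAt_id (0:ℝ)).smul_const w).const_add u
      have h2 : HasFDerivAt f (fderiv ℝ f u) (u + (0:ℝ) • w) := by
        simpa using (hdiff u).hasFDerivAt
      have := h2.comp_hasDerivAt (0:ℝ) h1
      exact this
    have hcomp : ConvexOn ℝ Set.univ (fun t : ℝ => f (u + t • w)) := by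
      refine ⟨convex_univ, ?_⟩
      intro t1 _ t2 _ c d hc hd hcd
      simp only [smul_eq_mul]
      have h5 : c • (u + t1 • w) + d • (u + t2 • w) = (c + d) • u + (c * t1 + d * t2) • w := by
        module
      rw [hcd, one_smul] at h5
      rw [← h5]
      exact hconv.2 (Set.mem_univ (u + t1 • w)) (Set.mem_univ (u + t2 • w)) hc hd hcd
    have hslope := hcomp.le_slope_of_hasDerivAt (Set.mem_univ (0:ℝ)) (Set.mem_univ (1:ℝ))
      one_pos hline
    rw [slope_def_field] at hslope
    simp only [zero_smul, add_zero, one_smul, sub_zero, div_one] at hslope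
    -- hslope : fderiv ℝ f u w ≤ f (u + w) - f u
    have hfw : f (u + w) = g 0 + m * s := by
      rw [show u + w = x + s • v by rw [hw]; abel]
      have hgs : f (x + s • v) = g s := rfl
      rw [hgs, haff s, hm]; ring
    have hlin : fderiv ℝ f u w = fderiv ℝ f u (x - u) + s * fderiv ℝ f u v := by
      rw [hw, show x + s • v - u = (x - u) + s • v by abel, map_add, map_smul]
      simp
    rw [hfw, hlin] at hslope
    linarith
  -- hence fderiv ℝ f · v is constant, so the second derivative vanishes
  have hdiff2 : DifferentiableAt ℝ (fderiv ℝ f) x₀ :=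
    ((hsmooth.fderiv_right (m := 1) (le_top)).differentiable (by simp)).differentiableAt
  have h3 : HasFDerivAt (fun u => fderiv ℝ f u v)
      ((ContinuousLinearMap.apply ℝ ℝ v).comp (fderiv ℝ (fderiv ℝ f) x₀)) x₀ :=
    (ContinuousLinearMap.apply ℝ ℝ v).hasFDerivAt.comp x₀ hdiff2.hasFDerivAt
  have h4 : (fun u => fderiv ℝ f u v) = fun _ => m := funext hkey
  rw [h4] at h3
  have h5 := h3.unique (hasFDerivAt_const m x₀)
  have h6 : fderiv ℝ (fderiv ℝ f) x₀ v v = 0 := by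
    have := congrArg (fun L => L v) h5
    simpa using this
  have h7 := hpd v hvne
  rw [iteratedFDeriv_two_apply] at h7
  simp only [Matrix.cons_val_zero, Matrix.cons_val_one, Matrix.head_cons] at h7
  rw [h6] at h7
  exact lt_irrefl 0 h7
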